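/- Let i ≥ 2 be an integer, let h₁, …, h_i be integers with |h_j| ≤ j for every j, and let δ_j ∈ ℝ^d be given values for 1 ≤ j < i. For 1 ≤ j < i define the attention score s_j = φ(h_i, 1) · φ(h_j, 1) − z(f(j)), where z(x) = x/√(2x² + 2) and f is the tie-breaking function, let M = {j : 1 ≤ j < i, s_j = max_{1 ≤ j' < i} s_{j'}}, and let δ̄ = (1/|M|) Σ_{j ∈ M} δ_j be the saturated-attention output of the values. If there exists j < i with h_j = h_i, then δ̄ = δ_{j*}, where j* is the greatest index j < i with h_j = h_i; that is, the head retrieves exactly the value at the rightmost matching position. -/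

import Mathlib

open scoped RealInnerProductSpace

/-- Layer norm: subtract the mean, then normalize to unit Euclidean norm. -/
noncomputable def layerNorm {ι : Type*} [Fintype ι] (v : EuclideanSpace ℝ ι) :
    EuclideanSpace ℝ ι :=
  let c : EuclideanSpace ℝ ι := WithLp.toLp 2 fun j => v j - (∑ l, v l) / (Fintype.card ι)
  ‖c‖⁻¹ • c

/-- The layer-norm hash φ(x, y) = layer_norm(⟨x, y, −x, −y⟩) ∈ ℝ⁴. -/
noncomputable def lnHash (x y : ℝ) : EuclideanSpace ℝ (Fin 4) :=
  layerNorm (WithLp.toLp 2 ![x, y, -x, -y] : EuclideanSpace ℝ (Fin 4))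

/-- Two-argument tie-breaking recursion: f(i, 0) = 1/i, f(i, k+1) = f(i−1, k) − f(i, k). -/
noncomputable def fTie : ℕ → ℝ → ℝ
  | 0, i => 1 / i
  | (k + 1), i => fTie k (i - 1) - fTie k i

/-- The tie-breaking function f on integers i ≥ 1, with ε = 10⁻¹⁰. -/
noncomputable def tieBreak (i : ℤ) : ℝ :=
  if i ≤ 4 then 1 / 1000 - (10 : ℝ)⁻¹ ^ 10 * (i : ℝ) else fTie 3 (i : ℝ) / 100

/-- z(x) = x/√(2x² + 2), the first coordinate of φ(x, 1). -/
noncomputable def zfn (x : ℝ) : ℝ := x / Real.sqrt (2 * x ^ 2 + 2)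

/-! ### Auxiliary lemmas -/

lemma inner_lnHash (a b : ℝ) :
    ⟪lnHash a 1, lnHash b 1⟫ =
      (a*b+1) / (Real.sqrt (a^2+1) * Real.sqrt (b^2+1)) := by
  set v : ℝ → EuclideanSpace ℝ (Fin 4) := fun x => WithLp.toLp 2 ![x, 1, -x, -1] with hv
  have hsum : ∀ x : ℝ, (∑ l, v x l) = 0 := by
    intro x
    simp [hv, Fin.sum_univ_four]
  have hc : ∀ x : ℝ, (WithLp.toLp 2 fun j => v x j - (∑ l, v x l) / (Fintype.card (Fin 4)) : EuclideanSpace ℝ (Fin 4)) = v x := by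
    intro x; ext j; rw [hsum]; simp
  have hnorm : ∀ x : ℝ, ‖v x‖ = Real.sqrt 2 * Real.sqrt (x^2+1) := by
    intro x
    rw [EuclideanSpace.norm_eq, ← Real.sqrt_mul (by norm_num)]
    congr 1
    simp [hv, Fin.sum_univ_four]
    ring
  have hinner : ⟪v a, v b⟫ = 2*(a*b+1) := by
    simp [hv, PiLp.inner_apply, Fin.sum_univ_four]
    ring
  show ⟪layerNorm (v a), layerNorm (v b)⟫ = _
  unfold layerNorm
  simp only [hc]
  rw [real_inner_smul_left, real_inner_smul_right, hinner, hnorm, hnorm]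
  have ha : Real.sqrt (a^2+1) > 0 := Real.sqrt_pos.2 (by positivity)
  have hb : Real.sqrt (b^2+1) > 0 := Real.sqrt_pos.2 (by positivity)
  have h2 : Real.sqrt 2 > 0 := Real.sqrt_pos.2 (by norm_num)
  have h22 : Real.sqrt 2 * Real.sqrt 2 = 2 := Real.mul_self_sqrt (by norm_num)
  field_simp
  linear_combination (-(a*b+1)) * h22

lemma inner_lnHash_self (a : ℝ) : ⟪lnHash a 1, lnHash a 1⟫ = 1 := by
  rw [inner_lnHash, Real.mul_self_sqrt (by positivity)]
  have h : a*a+1 = a^2+1 := by ring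
  rw [h, div_self (by positivity)]

lemma zfn_pos {x : ℝ} (hx : 0 < x) : 0 < zfn x :=
  div_pos hx (Real.sqrt_pos.2 (by positivity))

lemma zfn_le {x : ℝ} (hx : 0 ≤ x) : zfn x ≤ x := by
  have h1 : (1:ℝ) ≤ Real.sqrt (2 * x ^ 2 + 2) := by
    rw [show (1:ℝ) = Real.sqrt 1 by simp]
    exact Real.sqrt_le_sqrt (by nlinarith)
  calc zfn x = x / Real.sqrt (2 * x ^ 2 + 2) := rfl
    _ ≤ x / 1 := by
        apply div_le_div_of_nonneg_left hx one_pos h1 |>.trans_eq rfl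
    _ = x := by ring

lemma zfn_lt {x y : ℝ} (hx : 0 ≤ x) (hxy : x < y) : zfn x < zfn y := by
  have hu : 0 < Real.sqrt (2 * x ^ 2 + 2) := Real.sqrt_pos.2 (by positivity)
  have hv : 0 < Real.sqrt (2 * y ^ 2 + 2) := Real.sqrt_pos.2 (by positivity)
  have hu2 : Real.sqrt (2 * x ^ 2 + 2) ^ 2 = 2 * x ^ 2 + 2 := Real.sq_sqrt (by positivity)
  have hv2 : Real.sqrt (2 * y ^ 2 + 2) ^ 2 = 2 * y ^ 2 + 2 := Real.sq_sqrt (by positivity)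
  unfold zfn
  rw [div_lt_div_iff₀ hu hv]
  have hy : 0 < y := lt_of_le_of_lt hx hxy
  have hsq : (x * Real.sqrt (2 * y ^ 2 + 2)) ^ 2 < (y * Real.sqrt (2 * x ^ 2 + 2)) ^ 2 := by
    rw [mul_pow, mul_pow, hu2, hv2]
    nlinarith
  exact lt_of_pow_lt_pow_left₀ 2 (mul_pos hy hu).le hsq

lemma fTie3_eq (x : ℝ) (hx : 5 ≤ x) : fTie 3 x = 6 / (x * (x-1) * (x-2) * (x-3)) := by
  have h0 : x ≠ 0 := by linarith
  have h1 : x - 1 ≠ 0 := by intro h; nlinarith [h]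
  have h2 : x - 2 ≠ 0 := by intro h; nlinarith [h]
  have h3 : x - 3 ≠ 0 := by intro h; nlinarith [h]
  show fTie 2 (x-1) - fTie 2 x = _
  show (fTie 1 (x-1-1) - fTie 1 (x-1)) - (fTie 1 (x-1) - fTie 1 x) = _
  show ((fTie 0 (x-1-1-1) - fTie 0 (x-1-1)) - (fTie 0 (x-1-1) - fTie 0 (x-1)))
      - ((fTie 0 (x-1-1) - fTie 0 (x-1)) - (fTie 0 (x-1) - fTie 0 x)) = _
  show ((1/(x-1-1-1) - 1/(x-1-1)) - (1/(x-1-1) - 1/(x-1)))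
      - ((1/(x-1-1) - 1/(x-1)) - (1/(x-1) - 1/x)) = _
  have h1' : x - 1 - 1 ≠ 0 := by intro h; exact h2 (by linarith)
  have h2' : x - 1 - 1 - 1 ≠ 0 := by intro h; exact h3 (by linarith)
  field_simp
  ring

lemma prod4_pos {x : ℝ} (hx : 5 ≤ x) : (0:ℝ) < x * (x-1) * (x-2) * (x-3) :=
  mul_pos (mul_pos (mul_pos (by linarith) (by linarith)) (by linarith)) (by linarith)

lemma prod4_mono {x y : ℝ} (hx : 5 ≤ x) (hxy : x < y) :
    x * (x-1) * (x-2) * (x-3) < y * (y-1) * (y-2) * (y-3) := by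
  have h1 : x * (x-1) < y * (y-1) := by nlinarith
  have h2 : (x-2) * (x-3) < (y-2) * (y-3) := by nlinarith
  calc x * (x-1) * (x-2) * (x-3) = (x * (x-1)) * ((x-2)*(x-3)) := by ring
    _ < (y * (y-1)) * ((y-2)*(y-3)) :=
        mul_lt_mul'' h1 h2 (by nlinarith) (by nlinarith)
    _ = y * (y-1) * (y-2) * (y-3) := by ring

lemma prod4_ge {x : ℝ} (hx : 5 ≤ x) : (120:ℝ) ≤ x * (x-1) * (x-2) * (x-3) := by
  rcases eq_or_lt_of_le hx with h | h
  · rw [← h]; norm_num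
  · have := prod4_mono (le_refl 5) h
    norm_num at this
    linarith

lemma tieBreak_pos (j : ℤ) (hj : 1 ≤ j) : 0 < tieBreak j := by
  unfold tieBreak
  split
  · rename_i h4
    have : (j : ℝ) ≤ 4 := by exact_mod_cast h4
    have hc1 : (1 : ℝ) ≤ (j : ℝ) := by exact_mod_cast hj
    norm_num
    nlinarith
  · rename_i h4
    have h5 : (5 : ℝ) ≤ (j : ℝ) := by exact_mod_cast (by omega : (5:ℤ) ≤ j)
    rw [fTie3_eq _ h5]
    have p : (0:ℝ) < (j:ℝ) * ((j:ℝ)-1) * ((j:ℝ)-2) * ((j:ℝ)-3) := prod4_pos h5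
    positivity

lemma tieBreak_anti {j' j : ℤ} (hj' : 1 ≤ j') (hjj : j' < j) : tieBreak j < tieBreak j' := by
  have hc : (j' : ℝ) < (j : ℝ) := by exact_mod_cast hjj
  unfold tieBreak
  by_cases h4 : j ≤ 4
  · have h4' : j' ≤ 4 := by omega
    rw [if_pos h4, if_pos h4']
    nlinarith
  · have h5 : (5:ℝ) ≤ (j:ℝ) := by exact_mod_cast (by omega : (5:ℤ) ≤ j)
    rw [if_neg h4, fTie3_eq _ h5]
    have hle : 6 / ((j:ℝ) * ((j:ℝ)-1) * ((j:ℝ)-2) * ((j:ℝ)-3)) / 100 ≤ 1/2000 := by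
      rw [div_div, div_le_div_iff₀ (by nlinarith [prod4_pos h5] :
        (0:ℝ) < (j:ℝ) * ((j:ℝ)-1) * ((j:ℝ)-2) * ((j:ℝ)-3) * 100) (by norm_num)]
      nlinarith [prod4_ge h5]
    by_cases h4' : j' ≤ 4
    · rw [if_pos h4']
      have hc4 : (j' : ℝ) ≤ 4 := by exact_mod_cast h4'
      have hc1 : (1 : ℝ) ≤ (j' : ℝ) := by exact_mod_cast hj'
      calc 6 / ((j:ℝ) * ((j:ℝ)-1) * ((j:ℝ)-2) * ((j:ℝ)-3)) / 100 ≤ 1/2000 := hle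
        _ < 1 / 1000 - (10 : ℝ)⁻¹ ^ 10 * (j' : ℝ) := by norm_num; nlinarith
    · have h5' : (5:ℝ) ≤ (j':ℝ) := by exact_mod_cast (by omega : (5:ℤ) ≤ j')
      rw [if_neg h4', fTie3_eq _ h5']
      have := prod4_mono h5' hc
      have p1 := prod4_pos h5'
      have p2 := prod4_pos h5
      gcongr

lemma tieBreak_small (j : ℤ) (hj : 1 ≤ j) :
    tieBreak j ≤ 1 / (2 * (((j:ℝ)^2+1) * (((j:ℝ)+1)^2+1))) := by
  have hc1 : (1 : ℝ) ≤ (j : ℝ) := by exact_mod_cast hj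
  have hden : (0:ℝ) < 2 * (((j:ℝ)^2+1) * (((j:ℝ)+1)^2+1)) := by positivity
  unfold tieBreak
  by_cases h4 : j ≤ 4
  · rw [if_pos h4]
    interval_cases j <;> norm_num
  · have h5 : (5:ℝ) ≤ (j:ℝ) := by exact_mod_cast (by omega : (5:ℤ) ≤ j)
    rw [if_neg h4, fTie3_eq _ h5, div_div,
      div_le_div_iff₀ (by nlinarith [prod4_pos h5] :
        (0:ℝ) < (j:ℝ) * ((j:ℝ)-1) * ((j:ℝ)-2) * ((j:ℝ)-3) * 100) hden]
    have hc : (0:ℝ) ≤ (j:ℝ) - 5 := by linarith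
    nlinarith [mul_nonneg (mul_nonneg hc hc) hc,
      mul_nonneg (mul_nonneg (mul_nonneg hc hc) hc) hc, sq_nonneg ((j:ℝ) - 5)]

lemma gap_ineq (a b : ℝ) :
    (a*b+1) / (Real.sqrt (a^2+1) * Real.sqrt (b^2+1))
      ≤ 1 - (a-b)^2 / (2*((a^2+1)*(b^2+1))) := by
  set S := Real.sqrt (a^2+1) * Real.sqrt (b^2+1) with hS
  have hSpos : 0 < S := mul_pos (Real.sqrt_pos.2 (by positivity)) (Real.sqrt_pos.2 (by positivity))
  have hS2 : S^2 = (a^2+1)*(b^2+1) := by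
    rw [hS, mul_pow, Real.sq_sqrt (by positivity), Real.sq_sqrt (by positivity)]
  set t := (a-b)^2 / (2*((a^2+1)*(b^2+1))) with ht
  have hD : (0:ℝ) < 2*((a^2+1)*(b^2+1)) := by positivity
  have ht1 : t ≤ 1 := by
    rw [ht, div_le_one hD]
    nlinarith [sq_nonneg (a+b), sq_nonneg (a*b)]
  have ht0 : 0 ≤ t := by positivity
  rw [div_le_iff₀ hSpos]
  have hkey : ((1-t)*S)^2 = (a*b+1)^2 + (t*S)^2 := by
    have h2t : 2 * t * S^2 = (a-b)^2 := by
      rw [ht, hS2]; field_simp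
    nlinarith [hS2, h2t]
  nlinarith [hkey, mul_nonneg (sub_nonneg.2 ht1) hSpos.le, sq_nonneg (t*S)]

lemma int_gap (a b : ℤ) (hne : a ≠ b) :
    (b:ℤ)^2 + 1 ≤ (a-b)^2 * ((|a|+1)^2+1) := by
  set A := |a| with hAdef
  set T := |a - b| with hTdef
  have hT : 1 ≤ T := Int.one_le_abs (sub_ne_zero.2 hne)
  have hA : 0 ≤ A := abs_nonneg a
  have hb : |b| ≤ A + T := by
    calc |b| = |a - (a - b)| := by ring_nf
      _ ≤ A + T := abs_sub _ _
  have hb2 : b^2 ≤ (A + T)^2 := by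
    rw [← sq_abs b]
    exact pow_le_pow_left₀ (abs_nonneg b) hb 2
  have e1 : A^2 ≤ T^2 * A^2 := by
    nlinarith [mul_nonneg (by nlinarith : (0:ℤ) ≤ T^2 - 1) (sq_nonneg A)]
  have e2 : 2*A*T ≤ 2*(T^2)*A := by
    nlinarith [mul_nonneg (mul_nonneg hA (by linarith : (0:ℤ) ≤ T - 1)) (by linarith : (0:ℤ) ≤ T)]
  have e3 : T^2 + 1 ≤ 2*T^2 := by nlinarith
  have hT2 : (a-b)^2 = T^2 := (sq_abs _).symm
  rw [hT2]
  nlinarith [e1, e2, e3, hb2]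

lemma q_mono {u v : ℝ} (h0 : 0 ≤ u) (huv : u ≤ v) :
    (u^2+1)*((u+1)^2+1) ≤ (v^2+1)*((v+1)^2+1) := by
  have h1 : u^2+1 ≤ v^2+1 := by nlinarith
  have h2 : (u+1)^2+1 ≤ (v+1)^2+1 := by nlinarith
  exact mul_le_mul h1 h2 (by positivity) (by positivity)

/-- Rightmost retrieval via the layer-norm hash (Lemma "ranked-rightmost"):
if some j < i has h_j = h_i, then the saturated-attention output of the values δ_j under
the scores s_j = φ(h_i,1)·φ(h_j,1) − z(f(j)) equals δ_{j*} for the greatest such j*. -/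
theorem ranked_rightmost (d : ℕ) (i : ℤ) (hi : 2 ≤ i) (h : ℤ → ℤ)
    (hbound : ∀ j, 1 ≤ j → j ≤ i → |h j| ≤ j)
    (δ : ℤ → EuclideanSpace ℝ (Fin d))
    (jstar : ℤ) (hj1 : 1 ≤ jstar) (hj2 : jstar < i) (hjmatch : h jstar = h i)
    (hjgreatest : ∀ j, jstar < j → j < i → h j ≠ h i) :
    let s : ℤ → ℝ :=
      fun j => ⟪lnHash ((h i : ℤ) : ℝ) 1, lnHash ((h j : ℤ) : ℝ) 1⟫ - zfn (tieBreak j)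
    let J : Finset ℤ := Finset.Ico 1 i
    let M : Finset ℤ := J.filter fun j => ∀ j' ∈ J, s j' ≤ s j
    (M.card : ℝ)⁻¹ • ∑ j ∈ M, δ j = δ jstar := by
  intro s J M
  have hjsJ : jstar ∈ J := Finset.mem_Ico.2 ⟨hj1, hj2⟩
  have hsstar : s jstar = 1 - zfn (tieBreak jstar) := by
    show ⟪lnHash ((h i : ℤ) : ℝ) 1, lnHash ((h jstar : ℤ) : ℝ) 1⟫ - zfn (tieBreak jstar) = _
    rw [hjmatch, inner_lnHash_self]
  -- the strict-max claim
  have key : ∀ j ∈ J, j ≠ jstar → s j < s jstar := by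
    intro j hjJ hne
    obtain ⟨hjlo, hjhi⟩ := Finset.mem_Ico.1 hjJ
    have htbj : 0 < tieBreak j := tieBreak_pos j hjlo
    by_cases hmatch : h j = h i
    · -- matching position: must be left of jstar
      have hjlt : j < jstar := by
        rcases lt_trichotomy j jstar with h1 | h1 | h1
        · exact h1
        · exact absurd h1 hne
        · exact absurd hmatch (hjgreatest j h1 hjhi)
      have hsj : s j = 1 - zfn (tieBreak j) := by
        show ⟪lnHash ((h i : ℤ) : ℝ) 1, lnHash ((h j : ℤ) : ℝ) 1⟫ - zfn (tieBreak j) = _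
        rw [hmatch, inner_lnHash_self]
      have hanti : tieBreak jstar < tieBreak j := tieBreak_anti hjlo hjlt
      have := zfn_lt (tieBreak_pos jstar hj1).le hanti
      rw [hsj, hsstar]
      linarith
    · -- non-matching position
      set A : ℝ := ((h i : ℤ) : ℝ) with hA
      set B : ℝ := ((h j : ℤ) : ℝ) with hB
      have hsj : s j = (A*B+1) / (Real.sqrt (A^2+1) * Real.sqrt (B^2+1)) - zfn (tieBreak j) := by
        show ⟪lnHash A 1, lnHash B 1⟫ - zfn (tieBreak j) = _
        rw [inner_lnHash]
      have hgap := gap_ineq A B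
      -- integer gap, cast to ℝ
      have hig : (B^2 + 1 : ℝ) ≤ (A-B)^2 * ((|A|+1)^2+1) := by
        have := int_gap (h i) (h j) (fun hc => hmatch hc.symm)
        have hcast : ((|h i| : ℤ) : ℝ) = |A| := by
          rw [hA]; push_cast; ring
        calc (B^2 + 1 : ℝ) = (((h j)^2 + 1 : ℤ) : ℝ) := by rw [hB]; push_cast; ring
          _ ≤ ((((h i) - (h j))^2 * ((|h i|+1)^2+1) : ℤ) : ℝ) := by exact_mod_cast this
          _ = (A-B)^2 * ((|A|+1)^2+1) := by rw [← hcast]; push_cast; ring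
      have hQA : (0:ℝ) < (A^2+1)*((|A|+1)^2+1) := by positivity
      have hBB : (0:ℝ) < (A^2+1)*(B^2+1) := by positivity
      -- gap ≥ 1/(2 Q_A)
      have h3 : 1 / (2*((A^2+1)*((|A|+1)^2+1))) ≤ (A-B)^2 / (2*((A^2+1)*(B^2+1))) := by
        rw [div_le_div_iff₀ (by positivity) (by positivity)]
        have := mul_le_mul_of_nonneg_left hig (show (0:ℝ) ≤ A^2+1 by positivity)
        nlinarith [this]
      -- Q_A ≤ Q_m where m = jstar
      have habs : |h i| ≤ jstar := hjmatch ▸ hbound jstar hj1 hj2.le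
      have habsR : |A| ≤ (jstar:ℝ) := by
        rw [hA, ← Int.cast_abs]
        exact_mod_cast habs
      have hq := q_mono (abs_nonneg A) habsR
      have hq' : (A^2+1)*((|A|+1)^2+1) ≤ ((jstar:ℝ)^2+1)*(((jstar:ℝ)+1)^2+1) := by
        have hA2 : A^2 = |A|^2 := (sq_abs A).symm
        rw [hA2]; exact hq
      have h4 : 1 / (2*(((jstar:ℝ)^2+1)*(((jstar:ℝ)+1)^2+1)))
          ≤ 1 / (2*((A^2+1)*((|A|+1)^2+1))) := by
        apply one_div_le_one_div_of_le (by positivity)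
        linarith
      have h5 := tieBreak_small jstar hj1
      have h6 : zfn (tieBreak jstar) ≤ tieBreak jstar := zfn_le (tieBreak_pos jstar hj1).le
      have h7 : 0 < zfn (tieBreak j) := zfn_pos htbj
      rw [hsj, hsstar]
      linarith
  -- M = {jstar}
  have hM : M = {jstar} := by
    apply Finset.eq_singleton_iff_unique_mem.2
    constructor
    · refine Finset.mem_filter.2 ⟨hjsJ, fun j' hj' => ?_⟩
      rcases eq_or_ne j' jstar with rfl | hne
      · exact le_refl _
      · exact (key j' hj' hne).le
    · intro x hx
      by_contra hne
      obtain ⟨hxJ, hxmax⟩ := Finset.mem_filter.1 hx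
      have h1 := key x hxJ hne
      have h2 := hxmax jstar hjsJ
      linarith
  rw [hM]
  simp
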